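/- arXiv:1703.06977 — 3 statements merged into one kernel-verified Lean document; each statement's English description precedes it below -/
import Mathlib

section
/- Let A be a free finitely generated abelian group equipped with a commutative ring structure and a ℤ-linear map χ : A → ℤ such that the symmetric pairing ⟨x,y⟩ := χ(x·y) is unimodular (the induced map A → Hom(A,ℤ) is bijective). Let A = F⁰A ⊇ F¹A ⊇ … ⊇ F^d A ⊇ F^{d+1}A = 0 be a decreasing filtration by subgroups that is multiplicative (FⁱA·FʲA ⊆ F^{i+j}A for all i,j ≥ 0, where F^k A = 0 for k ≥ d+1) and satisfies rk(F^iA/F^{i+1}A) = rk(F^{d-i}A/F^{d-i+1}A) for each 0 ≤ i ≤ d. Suppose the filtration splits, i.e. for each 0 ≤ i ≤ d the quotient A/F^iA is torsion-free. Then for each 0 ≤ i ≤ d, the induced pairing (F^iA/F^{i+1}A) ⊗ (F^{d-i}A/F^{d-i+1}A) → ℤ, sending [x]⊗[y] to χ(x·y), is well-defined and unimodular, i.e. the induced map F^iA/F^{i+1}A → Hom(F^{d-i}A/F^{d-i+1}A, ℤ) is bijective. -/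
open Module Submodule LinearMap

section Aux
variable {R M : Type*} [CommRing R] [IsDomain R] [IsPrincipalIdealRing R]
  [AddCommGroup M] [Module R M] [Module.Finite R M]

lemma aux_finrank_quotient_add (N : Submodule R M) :
    finrank R (M ⧸ N) + finrank R N = finrank R M := by
  haveI : IsNoetherian R M := isNoetherian_of_isNoetherianRing_of_finite R M
  have h := Submodule.rank_quotient_add_rank N
  have h1 : Module.rank R (M ⧸ N) < Cardinal.aleph0 := rank_lt_aleph0 R _
  have h2 : Module.rank R N < Cardinal.aleph0 := rank_lt_aleph0 R _
  have h3 := Cardinal.toNat_add h1 h2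
  rw [h] at h3
  rw [Module.finrank, Module.finrank, Module.finrank, ← h3]

lemma aux_eq_of_le_of_finrank {N W : Submodule R M} (hNW : N ≤ W)
    (hr : finrank R W ≤ finrank R N) (htf : NoZeroSMulDivisors R (M ⧸ N)) : N = W := by
  haveI : IsNoetherian R M := isNoetherian_of_isNoetherianRing_of_finite R M
  have key : finrank R (↥W ⧸ N.comap W.subtype) = 0 := by
    have h1 := aux_finrank_quotient_add (N.comap W.subtype)
    have h2 : finrank R (N.comap W.subtype) = finrank R N :=
      (Submodule.comapSubtypeEquivOfLe hNW).finrank_eq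
    omega
  refine le_antisymm hNW fun w hw => ?_
  obtain ⟨a, ha, ha2⟩ := Module.finrank_eq_zero_iff.mp key
    (Submodule.Quotient.mk (⟨w, hw⟩ : W))
  rw [← Submodule.Quotient.mk_smul, Submodule.Quotient.mk_eq_zero] at ha2
  have hmem : a • w ∈ N := ha2
  have : a • (Submodule.Quotient.mk w : M ⧸ N) = 0 := by
    rw [← Submodule.Quotient.mk_smul, Submodule.Quotient.mk_eq_zero]
    exact hmem
  have := (smul_eq_zero.mp this).resolve_left ha
  exact (Submodule.Quotient.mk_eq_zero _).1 this

omit [IsPrincipalIdealRing R] in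
lemma aux_finrank_dual (P : Type*) [AddCommGroup P] [Module R P] [Module.Free R P]
    [Module.Finite R P] : finrank R (Module.Dual R P) = finrank R P := by
  classical
  let b := Module.Free.chooseBasis R P
  rw [Module.finrank_eq_card_basis b.dualBasis, Module.finrank_eq_card_basis b]

lemma aux_finrank_dualAnnihilator (N : Submodule R M)
    (htf : NoZeroSMulDivisors R (M ⧸ N)) :
    finrank R N.dualAnnihilator = finrank R (M ⧸ N) := by
  haveI : Module.Free R (M ⧸ N) := Module.free_of_finite_type_torsion_free'
  rw [← N.dualQuotEquivDualAnnihilator.finrank_eq]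
  exact aux_finrank_dual _

end Aux

/-- The linear map `A → Dual ℤ A` induced by the pairing `(a,b) ↦ χ (a*b)`. -/
def phiMap (A : Type) [CommRing A] (χ : A →ₗ[ℤ] ℤ) : A →ₗ[ℤ] Module.Dual ℤ A where
  toFun a := χ ∘ₗ LinearMap.mulLeft ℤ a
  map_add' a b := by
    ext c
    show χ ((a + b) * c) = χ (a * c) + χ (b * c)
    rw [add_mul, map_add]
  map_smul' r a := by
    ext c
    show χ ((r • a) * c) = r • (χ (a * c))
    rw [smul_mul_assoc, map_smul]

lemma phiMap_apply {A : Type} [CommRing A] (χ : A →ₗ[ℤ] ℤ) (a b : A) :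
    phiMap A χ a b = χ (a * b) := rfl

lemma keyAnn (A : Type) [CommRing A] [Module.Free ℤ A] [Module.Finite ℤ A]
    (χ : A →ₗ[ℤ] ℤ) (hφ : Function.Bijective (phiMap A χ))
    (d : ℕ) (F : ℕ → Submodule ℤ A)
    (hF0 : F 0 = ⊤)
    (hFtop : ∀ k, d + 1 ≤ k → F k = ⊥)
    (hdec : ∀ i, F (i + 1) ≤ F i)
    (hmul : ∀ i j : ℕ, ∀ x ∈ F i, ∀ y ∈ F j, x * y ∈ F (i + j))
    (hrk : ∀ i ≤ d,
      Module.finrank ℤ (↥(F i) ⧸ (F (i + 1)).comap (F i).subtype) =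
        Module.finrank ℤ (↥(F (d - i)) ⧸ (F (d - i + 1)).comap (F (d - i)).subtype))
    (hsplit : ∀ i ≤ d, NoZeroSMulDivisors ℤ (A ⧸ F i)) :
    ∀ j ≤ d + 1, Submodule.map (phiMap A χ) (F (d + 1 - j)) = (F j).dualAnnihilator := by
  haveI : IsNoetherian ℤ A := isNoetherian_of_isNoetherianRing_of_finite ℤ A
  have htf : ∀ k, NoZeroSMulDivisors ℤ (A ⧸ F k) := by
    intro k
    by_cases hk : k ≤ d
    · exact hsplit k hk
    · have hbot := hFtop k (by omega)
      have e : (A ⧸ F k) ≃ₗ[ℤ] A := Submodule.quotEquivOfEqBot (F k) hbot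
      constructor
      intro c x hx
      have h0 : c • (e x) = 0 := by rw [← map_smul, hx, map_zero]
      rcases smul_eq_zero.mp h0 with h | h
      · exact Or.inl h
      · exact Or.inr (by simpa using e.injective (by rw [h, map_zero]))
  have hfin : ∀ m, Module.Finite ℤ ↥(F m) := fun m =>
    Module.Finite.iff_fg.mpr (IsNoetherian.noetherian _)
  have hstep : ∀ m, finrank ℤ (↥(F m) ⧸ (F (m + 1)).comap (F m).subtype) +
      finrank ℤ ↥(F (m + 1)) = finrank ℤ ↥(F m) := by
    intro m
    haveI := hfin m
    have h := aux_finrank_quotient_add ((F (m + 1)).comap (F m).subtype)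
    rwa [(Submodule.comapSubtypeEquivOfLe (hdec m)).finrank_eq] at h
  have hsum : ∀ j ≤ d + 1, finrank ℤ ↥(F (d + 1 - j)) + finrank ℤ ↥(F j) = finrank ℤ A := by
    intro j hj
    induction j with
    | zero =>
      rw [Nat.sub_zero, hFtop (d + 1) le_rfl, hF0, finrank_bot, finrank_top, zero_add]
    | succ n ih =>
      have hn : n ≤ d := by omega
      have ihn := ih (by omega)
      have e1 : d + 1 - n = (d - n) + 1 := by omega
      have e2 : d + 1 - (n + 1) = d - n := by omega
      rw [e2]
      have h1 := hstep (d - n)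
      have h2 := hstep n
      have h3 := hrk n hn
      rw [e1] at ihn
      omega
  intro j hj
  have hk : d + 1 - j + j = d + 1 := by omega
  have le1 : Submodule.map (phiMap A χ) (F (d + 1 - j)) ≤ (F j).dualAnnihilator := by
    rintro _ ⟨x, hx, rfl⟩
    rw [Submodule.mem_dualAnnihilator]
    intro w hw
    rw [phiMap_apply]
    have hm : x * w ∈ F (d + 1) := by rw [← hk]; exact hmul _ _ x hx w hw
    rw [hFtop (d + 1) le_rfl, Submodule.mem_bot] at hm
    rw [hm, map_zero]
  have tf : NoZeroSMulDivisors ℤ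
      ((Module.Dual ℤ A) ⧸ Submodule.map (phiMap A χ) (F (d + 1 - j))) := by
    have e : (A ⧸ F (d + 1 - j)) ≃ₗ[ℤ]
        ((Module.Dual ℤ A) ⧸ Submodule.map (phiMap A χ) (F (d + 1 - j))) :=
      Submodule.Quotient.equiv _ _ (LinearEquiv.ofBijective (phiMap A χ) hφ) rfl
    haveI := htf (d + 1 - j)
    constructor
    intro c x hx
    obtain ⟨y, rfl⟩ := e.surjective x
    have h0 : e (c • y) = 0 := by rw [map_smul, hx]
    have h1 : c • y = 0 := by
      apply e.injective; rw [h0, map_zero]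
    rcases smul_eq_zero.mp h1 with h | h
    · exact Or.inl h
    · exact Or.inr (by rw [h, map_zero])
  haveI := hfin (d + 1 - j)
  have fr1 : finrank ℤ ↥(Submodule.map (phiMap A χ) (F (d + 1 - j))) =
      finrank ℤ ↥(F (d + 1 - j)) :=
    ((F (d + 1 - j)).equivMapOfInjective _ hφ.injective).finrank_eq.symm
  have fr2 : finrank ℤ ↥((F j).dualAnnihilator) = finrank ℤ (A ⧸ F j) :=
    aux_finrank_dualAnnihilator _ (htf j)
  have fr3 := aux_finrank_quotient_add (F j)
  have fr4 := hsum j hj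
  exact aux_eq_of_le_of_finrank le1 (by omega) tf

/-- The bilinear pairing on submodules induced by `χ (x*y)`. -/
def grPair (A : Type) [CommRing A] (χ : A →ₗ[ℤ] ℤ) (P Q : Submodule ℤ A) :
    ↥P →ₗ[ℤ] ↥Q →ₗ[ℤ] ℤ :=
  LinearMap.mk₂ ℤ (fun x y => χ ((x : A) * (y : A)))
    (fun x x' y => by
      show χ (((x : A) + (x' : A)) * (y : A)) = _
      rw [add_mul, map_add])
    (fun c x y => by
      show χ ((c • (x : A)) * (y : A)) = c • χ ((x : A) * (y : A))
      rw [smul_mul_assoc, map_smul])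
    (fun x y y' => by
      show χ ((x : A) * ((y : A) + (y' : A))) = _
      rw [mul_add, map_add])
    (fun c x y => by
      show χ ((x : A) * (c • (y : A))) = c • χ ((x : A) * (y : A))
      rw [mul_smul_comm, map_smul])

/-- If a free finitely generated abelian group `A` carries a commutative ring
structure and a linear map `χ : A → ℤ` whose associated symmetric pairing `(x,y) ↦ χ (x*y)` is
unimodular, and `F` is a multiplicative decreasing filtration with `F 0 = A`, `F (d+1) = 0`,
with symmetric ranks of adjoint quotients, that splits (all quotients `A ⧸ F i` torsion-free),
then for each `i ≤ d` the induced pairing `grⁱ ⊗ gr^{d-i} → ℤ` is well-defined and unimodular. -/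
theorem stmt_0
    (A : Type) [CommRing A] [Module.Free ℤ A] [Module.Finite ℤ A]
    (χ : A →ₗ[ℤ] ℤ)
    (hχ : Function.Bijective fun a : A => χ ∘ₗ LinearMap.mulLeft ℤ a)
    (d : ℕ) (F : ℕ → Submodule ℤ A)
    (hF0 : F 0 = ⊤)
    (hFtop : ∀ k, d + 1 ≤ k → F k = ⊥)
    (hdec : ∀ i, F (i + 1) ≤ F i)
    (hmul : ∀ i j : ℕ, ∀ x ∈ F i, ∀ y ∈ F j, x * y ∈ F (i + j))
    (hrk : ∀ i ≤ d,
      Module.finrank ℤ (↥(F i) ⧸ (F (i + 1)).comap (F i).subtype) =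
        Module.finrank ℤ (↥(F (d - i)) ⧸ (F (d - i + 1)).comap (F (d - i)).subtype))
    (hsplit : ∀ i ≤ d, NoZeroSMulDivisors ℤ (A ⧸ F i)) :
    ∀ i ≤ d, ∃ B : (↥(F i) ⧸ (F (i + 1)).comap (F i).subtype) →ₗ[ℤ]
        (↥(F (d - i)) ⧸ (F (d - i + 1)).comap (F (d - i)).subtype) →ₗ[ℤ] ℤ,
      (∀ (x : F i) (y : F (d - i)),
        B (Submodule.Quotient.mk x) (Submodule.Quotient.mk y) = χ ((x : A) * (y : A))) ∧
      Function.Bijective B := by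
  have hφ : Function.Bijective (phiMap A χ) := hχ
  have key := keyAnn A χ hφ d F hF0 hFtop hdec hmul hrk hsplit
  intro i hi
  -- the two key annihilator identities
  have e1 : d + 1 - (d - i) = i + 1 := by omega
  have e2 : d + 1 - (d - i + 1) = i := by omega
  have key1 := key (d - i) (by omega)
  rw [e1] at key1
  have key2 := key (d - i + 1) (by omega)
  rw [e2] at key2
  -- vanishing lemmas
  have hzero1 : ∀ x : A, x ∈ F (i + 1) → ∀ y : A, y ∈ F (d - i) → χ (x * y) = 0 := by
    intro x hx y hy
    have h : x * y ∈ F ((i + 1) + (d - i)) := hmul _ _ x hx y hy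
    have e : (i + 1) + (d - i) = d + 1 := by omega
    rw [e, hFtop (d + 1) le_rfl, Submodule.mem_bot] at h
    rw [h, map_zero]
  have hzero2 : ∀ x : A, x ∈ F i → ∀ y : A, y ∈ F (d - i + 1) → χ (x * y) = 0 := by
    intro x hx y hy
    have h : x * y ∈ F (i + (d - i + 1)) := hmul _ _ x hx y hy
    have e : i + (d - i + 1) = d + 1 := by omega
    rw [e, hFtop (d + 1) le_rfl, Submodule.mem_bot] at h
    rw [h, map_zero]
  have h1 : (F (i + 1)).comap (F i).subtype ≤ ker (grPair A χ (F i) (F (d - i))) := by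
    intro x hx
    rw [LinearMap.mem_ker]
    apply LinearMap.ext
    intro y
    exact hzero1 x hx y y.2
  have h2 : (F (d - i + 1)).comap (F (d - i)).subtype ≤
      ker (Submodule.liftQ _ (grPair A χ (F i) (F (d - i))) h1).flip := by
    intro y hy
    rw [LinearMap.mem_ker]
    apply LinearMap.ext
    intro u
    obtain ⟨x, rfl⟩ := Submodule.Quotient.mk_surjective _ u
    show grPair A χ (F i) (F (d - i)) x y = 0
    exact hzero2 x x.2 y hy
  refine ⟨(Submodule.liftQ _ (Submodule.liftQ _ (grPair A χ (F i) (F (d - i))) h1).flip h2).flip,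
    fun x y => rfl, ?_, ?_⟩
  · -- injectivity
    rw [injective_iff_map_eq_zero]
    intro u hu
    obtain ⟨x, rfl⟩ := Submodule.Quotient.mk_surjective _ u
    rw [Submodule.Quotient.mk_eq_zero]
    have hmem : phiMap A χ (x : A) ∈ (F (d - i)).dualAnnihilator := by
      rw [Submodule.mem_dualAnnihilator]
      intro w hw
      exact LinearMap.congr_fun hu (Submodule.Quotient.mk (⟨w, hw⟩ : F (d - i)))
    rw [← key1] at hmem
    obtain ⟨x', hx', hx'e⟩ := hmem
    have hxx : x' = (x : A) := hφ.injective hx'e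
    have : (x : A) ∈ F (i + 1) := hxx ▸ hx'
    exact this
  · -- surjectivity
    intro g
    haveI : IsNoetherian ℤ A := isNoetherian_of_isNoetherianRing_of_finite ℤ A
    haveI : NoZeroSMulDivisors ℤ (A ⧸ F (d - i)) := hsplit (d - i) (by omega)
    haveI : Module.Free ℤ (A ⧸ F (d - i)) := Module.free_of_finite_type_torsion_free'
    obtain ⟨s, hs⟩ := Module.projective_lifting_property (F (d - i)).mkQ LinearMap.id
      (Submodule.mkQ_surjective _)
    set g' : ↥(F (d - i)) →ₗ[ℤ] ℤ :=
      g ∘ₗ ((F (d - i + 1)).comap (F (d - i)).subtype).mkQ with hg'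
    have hp : ∀ a : A, a - s ((F (d - i)).mkQ a) ∈ F (d - i) := by
      intro a
      have h0 : (F (d - i)).mkQ (a - s ((F (d - i)).mkQ a)) = 0 := by
        have hcs : (F (d - i)).mkQ (s ((F (d - i)).mkQ a)) = (F (d - i)).mkQ a :=
          LinearMap.congr_fun hs ((F (d - i)).mkQ a)
        rw [map_sub, hcs, sub_self]
      exact (Submodule.Quotient.mk_eq_zero _).1 h0
    set π : A →ₗ[ℤ] ↥(F (d - i)) :=
      LinearMap.codRestrict (F (d - i)) (LinearMap.id - s ∘ₗ (F (d - i)).mkQ) hp with hπ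
    have hπval : ∀ w : ↥(F (d - i)), π (w : A) = w := by
      intro w
      apply Subtype.ext
      show (w : A) - s ((F (d - i)).mkQ (w : A)) = (w : A)
      have : (F (d - i)).mkQ (w : A) = 0 := (Submodule.Quotient.mk_eq_zero _).2 w.2
      rw [this, map_zero, sub_zero]
    set f : Module.Dual ℤ A := g' ∘ₗ π with hf
    have hfann : f ∈ (F (d - i + 1)).dualAnnihilator := by
      rw [Submodule.mem_dualAnnihilator]
      intro w hw
      have hwF : w ∈ F (d - i) := hdec (d - i) hw
      show g' (π w) = 0
      rw [hπval ⟨w, hwF⟩]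
      show g (Submodule.Quotient.mk ⟨w, hwF⟩) = 0
      have : (Submodule.Quotient.mk (⟨w, hwF⟩ : F (d - i)) :
          ↥(F (d - i)) ⧸ (F (d - i + 1)).comap (F (d - i)).subtype) = 0 :=
        (Submodule.Quotient.mk_eq_zero _).2 hw
      rw [this, map_zero]
    rw [← key2] at hfann
    obtain ⟨x, hx, hxe⟩ := hfann
    refine ⟨Submodule.Quotient.mk ⟨x, hx⟩, ?_⟩
    apply LinearMap.ext
    intro u
    obtain ⟨y, rfl⟩ := Submodule.Quotient.mk_surjective _ u
    show χ (x * (y : A)) = g (Submodule.Quotient.mk y)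
    have h3 : phiMap A χ x (y : A) = f (y : A) := by rw [hxe]
    rw [phiMap_apply] at h3
    rw [h3]
    show g' (π (y : A)) = _
    rw [hπval y]
    rfl
end

section
/- Let A be a free finitely generated abelian group with a (not necessarily symmetric) unimodular bilinear pairing ⟨·,·⟩ : A ⊗ A → ℤ, and let A = F⁰A ⊇ F¹A ⊇ … ⊇ F^d A ⊇ F^{d+1}A = 0 be a decreasing filtration by subgroups such that ⟨F^iA, F^jA⟩ = 0 for all i,j ≥ 0 with i+j ≥ d+1, and such that rk(F^iA/F^{i+1}A) = rk(F^{d-i}A/F^{d-i+1}A) for each 0 ≤ i ≤ d. Suppose the filtration splits, i.e. each quotient A/F^iA is torsion-free. Then for each 0 ≤ i ≤ d, the induced pairing (F^iA/F^{i+1}A) ⊗ (F^{d-i}A/F^{d-i+1}A) → ℤ, sending [x]⊗[y] to ⟨x,y⟩, is well-defined and unimodular. -/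
open Module Submodule LinearMap

section Aux

variable {A : Type} [AddCommGroup A] [Module.Free ℤ A] [Module.Finite ℤ A]

private lemma tf_of_injective {M N : Type*} [AddCommGroup M] [AddCommGroup N]
    [Module ℤ M] [Module ℤ N] [NoZeroSMulDivisors ℤ N] (f : M →ₗ[ℤ] N)
    (hf : Function.Injective f) : NoZeroSMulDivisors ℤ M := by
  constructor
  intro c x h
  have h2 := congrArg f h
  rw [map_zsmul, map_zero] at h2
  rcases NoZeroSMulDivisors.eq_zero_or_eq_zero_of_smul_eq_zero h2 with h3 | h3
  · exact Or.inl h3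
  · exact Or.inr (hf (by rw [h3, map_zero]))

private lemma exists_retraction (N : Submodule ℤ A) [NoZeroSMulDivisors ℤ (A ⧸ N)] :
    ∃ π : A →ₗ[ℤ] ↥N, ∀ n : ↥N, π ↑n = n := by
  obtain ⟨g, hg⟩ := Module.projective_lifting_property N.mkQ (LinearMap.id)
    (Submodule.mkQ_surjective N)
  have hmem : ∀ x : A, x - g (N.mkQ x) ∈ N := by
    intro x
    rw [← Submodule.Quotient.mk_eq_zero]
    have := LinearMap.congr_fun hg (N.mkQ x)
    simpa [Submodule.Quotient.mk_sub, sub_eq_zero] using this.symm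
  refine ⟨(LinearMap.id - g ∘ₗ N.mkQ).codRestrict N (by simpa using hmem), ?_⟩
  intro n
  ext
  simp [LinearMap.codRestrict_apply, (Submodule.Quotient.mk_eq_zero N).mpr n.2]

private lemma exists_extend (N : Submodule ℤ A) [NoZeroSMulDivisors ℤ (A ⧸ N)]
    (f : ↥N →ₗ[ℤ] ℤ) : ∃ g : A →ₗ[ℤ] ℤ, ∀ n : ↥N, g ↑n = f n := by
  obtain ⟨π, hπ⟩ := exists_retraction N
  exact ⟨f ∘ₗ π, fun n => by simp [hπ n]⟩

private lemma le_of_finrank_le {N N' : Submodule ℤ A} [NoZeroSMulDivisors ℤ (A ⧸ N)]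
    (h : N ≤ N') (hr : finrank ℤ ↥N' ≤ finrank ℤ ↥N) : N' ≤ N := by
  intro x hx
  set q : ↥N' →ₗ[ℤ] A ⧸ N := N.mkQ ∘ₗ N'.subtype with hq
  have hker : LinearMap.ker q = N.comap N'.subtype := by
    rw [hq, LinearMap.ker_comp, Submodule.ker_mkQ]
  have h1 := Submodule.finrank_quotient_add_finrank (R := ℤ) (LinearMap.ker q)
  have e1 : finrank ℤ ↥(LinearMap.ker q) = finrank ℤ ↥N := by
    rw [hker]; exact (Submodule.comapSubtypeEquivOfLe h).finrank_eq
  have e2 : finrank ℤ (↥N' ⧸ LinearMap.ker q) = finrank ℤ ↥(LinearMap.range q) :=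
    q.quotKerEquivRange.finrank_eq
  have hrange : finrank ℤ ↥(LinearMap.range q) = 0 := by omega
  have htf : NoZeroSMulDivisors ℤ ↥(LinearMap.range q) :=
    tf_of_injective (LinearMap.range q).subtype Subtype.val_injective
  have hz : (⟨q ⟨x, hx⟩, LinearMap.mem_range_self q _⟩ : ↥(LinearMap.range q)) = 0 := by
    obtain ⟨a, ha, haz⟩ := Module.finrank_eq_zero_iff.mp hrange
      ⟨q ⟨x, hx⟩, LinearMap.mem_range_self q _⟩
    rcases smul_eq_zero.mp haz with h' | h'
    · exact absurd h' ha
    · exact h'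
  have : q ⟨x, hx⟩ = 0 := by simpa using congrArg Subtype.val hz
  simpa [hq, Submodule.Quotient.mk_eq_zero] using this

private lemma finrank_ker_dual (Bmap : A →ₗ[ℤ] (A →ₗ[ℤ] ℤ)) (hB : Function.Surjective Bmap)
    (N : Submodule ℤ A) [NoZeroSMulDivisors ℤ (A ⧸ N)] :
    finrank ℤ ↥(LinearMap.ker (N.subtype.dualMap ∘ₗ Bmap)) + finrank ℤ ↥N = finrank ℤ A := by
  set ψ : A →ₗ[ℤ] Module.Dual ℤ ↥N := N.subtype.dualMap ∘ₗ Bmap with hψ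
  have hsurj : Function.Surjective ψ := by
    intro f
    obtain ⟨π, hπ⟩ := exists_retraction N
    obtain ⟨x, hx⟩ := hB (f ∘ₗ π)
    refine ⟨x, ?_⟩
    ext n
    simp [hψ, hx, hπ n]
  have e := (LinearMap.quotKerEquivOfSurjective ψ hsurj).finrank_eq
  have h1 := Submodule.finrank_quotient_add_finrank (R := ℤ) (LinearMap.ker ψ)
  have h2 : finrank ℤ (Module.Dual ℤ ↥N) = finrank ℤ ↥N :=
    Module.finrank_linearMap_self ℤ ℤ ↥N
  omega

end Aux

/-- If `A` is a free finitely generated abelian group with a (not necessarily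
symmetric) unimodular bilinear pairing `B`, and `F` is a decreasing filtration with `F 0 = A`,
`F (d+1) = 0`, orthogonal in the sense `⟨F i, F j⟩ = 0` for `i + j ≥ d + 1`, with symmetric
ranks of adjoint quotients, that splits, then for each `i ≤ d` the induced pairing
`grⁱ ⊗ gr^{d-i} → ℤ` is well-defined and unimodular. -/
theorem stmt_1
    (A : Type) [AddCommGroup A] [Module.Free ℤ A] [Module.Finite ℤ A]
    (B : A →ₗ[ℤ] A →ₗ[ℤ] ℤ)
    (hB : Function.Bijective B)
    (d : ℕ) (F : ℕ → Submodule ℤ A)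
    (hF0 : F 0 = ⊤)
    (hFtop : ∀ k, d + 1 ≤ k → F k = ⊥)
    (hdec : ∀ i, F (i + 1) ≤ F i)
    (horth : ∀ i j : ℕ, d + 1 ≤ i + j → ∀ x ∈ F i, ∀ y ∈ F j, B x y = 0)
    (hrk : ∀ i ≤ d,
      Module.finrank ℤ (↥(F i) ⧸ (F (i + 1)).comap (F i).subtype) =
        Module.finrank ℤ (↥(F (d - i)) ⧸ (F (d - i + 1)).comap (F (d - i)).subtype))
    (hsplit : ∀ i ≤ d, NoZeroSMulDivisors ℤ (A ⧸ F i)) :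
    ∀ i ≤ d, ∃ P : (↥(F i) ⧸ (F (i + 1)).comap (F i).subtype) →ₗ[ℤ]
        (↥(F (d - i)) ⧸ (F (d - i + 1)).comap (F (d - i)).subtype) →ₗ[ℤ] ℤ,
      (∀ (x : F i) (y : F (d - i)),
        P (Submodule.Quotient.mk x) (Submodule.Quotient.mk y) = B (x : A) (y : A)) ∧
      Function.Bijective P := by
  -- torsion-freeness of all quotients
  have htf : ∀ j, NoZeroSMulDivisors ℤ (A ⧸ F j) := by
    intro j
    by_cases hj : j ≤ d
    · exact hsplit j hj
    · have hbot : F j = ⊥ := hFtop j (by omega)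
      haveI : NoZeroSMulDivisors ℤ A :=
        have := IsAddTorsionFree.of_isTorsionFree (R := ℤ) (M := A)
        IsAddTorsionFree.to_noZeroSMulDivisors_int
      exact tf_of_injective (Submodule.quotEquivOfEqBot (F j) hbot).toLinearMap
        (Submodule.quotEquivOfEqBot (F j) hbot).injective
  -- rank additivity along the filtration
  have hadd : ∀ j, finrank ℤ ↥(F j) =
      finrank ℤ (↥(F j) ⧸ (F (j + 1)).comap (F j).subtype) + finrank ℤ ↥(F (j + 1)) := by
    intro j
    have h1 := Submodule.finrank_quotient_add_finrank (R := ℤ) ((F (j + 1)).comap (F j).subtype)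
    rw [(Submodule.comapSubtypeEquivOfLe (hdec j)).finrank_eq] at h1
    omega
  -- complementary rank formula
  have hsum : ∀ j ≤ d + 1, finrank ℤ ↥(F j) + finrank ℤ ↥(F (d + 1 - j)) = finrank ℤ A := by
    intro j
    induction j with
    | zero =>
      intro _
      have hb : F (d + 1 - 0) = ⊥ := hFtop _ (by omega)
      rw [hF0, hb, finrank_bot]
      simpa using finrank_top ℤ A
    | succ n ih =>
      intro hn
      have hn' : n ≤ d := by omega
      have h1 := hadd n
      have h2 := hadd (d - n)
      have h3 := hrk n hn'
      have e1 : d + 1 - n = d - n + 1 := by omega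
      have e2 : d + 1 - (n + 1) = d - n := by omega
      have h4 := ih (by omega)
      rw [e1] at h4
      rw [e2]
      omega
  -- the key duality: the left orthogonal complement of F j is F (d+1-j)
  have key : ∀ j ≤ d + 1, LinearMap.ker ((F j).subtype.dualMap ∘ₗ B) = F (d + 1 - j) := by
    intro j hj
    have : NoZeroSMulDivisors ℤ (A ⧸ F j) := htf j
    have : NoZeroSMulDivisors ℤ (A ⧸ F (d + 1 - j)) := htf _
    have hle : F (d + 1 - j) ≤ LinearMap.ker ((F j).subtype.dualMap ∘ₗ B) := by
      intro x hx
      rw [LinearMap.mem_ker]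
      ext y
      exact horth (d + 1 - j) j (by omega) x hx ↑y y.2
    have hr1 := finrank_ker_dual B hB.2 (F j)
    have hr2 := hsum j hj
    exact le_antisymm (le_of_finrank_le hle (by omega)) hle
  -- now construct the pairing
  intro i hi
  set K : Submodule ℤ ↥(F i) := (F (i + 1)).comap (F i).subtype with hK
  set K' : Submodule ℤ ↥(F (d - i)) := (F (d - i + 1)).comap (F (d - i)).subtype with hK'
  set Q : ↥(F i) →ₗ[ℤ] ↥(F (d - i)) →ₗ[ℤ] ℤ :=
    ((F (d - i)).subtype.dualMap ∘ₗ B) ∘ₗ (F i).subtype with hQ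
  have hQapp : ∀ (x : ↥(F i)) (y : ↥(F (d - i))), Q x y = B ↑x ↑y := fun x y => rfl
  have h1 : K' ≤ LinearMap.ker Q.flip := by
    intro y hy
    rw [LinearMap.mem_ker]
    ext x
    exact horth i (d - i + 1) (by omega) ↑x x.2 ↑y hy
  set R : (↥(F (d - i)) ⧸ K') →ₗ[ℤ] (↥(F i) →ₗ[ℤ] ℤ) := K'.liftQ Q.flip h1 with hR
  have h2 : K ≤ LinearMap.ker R.flip := by
    intro x hx
    rw [LinearMap.mem_ker]
    ext y
    show R.flip x (Submodule.Quotient.mk y) = 0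
    show R (Submodule.Quotient.mk y) x = 0
    rw [hR, Submodule.liftQ_apply]
    exact horth (i + 1) (d - i) (by omega) ↑x hx ↑y y.2
  refine ⟨K.liftQ R.flip h2, ?_, ?_, ?_⟩
  · intro x y
    rw [Submodule.liftQ_apply]
    show R (Submodule.Quotient.mk y) x = B ↑x ↑y
    rw [hR, Submodule.liftQ_apply]
    rfl
  · -- injectivity
    rw [← LinearMap.ker_eq_bot, Submodule.eq_bot_iff]
    intro xbar hxbar
    obtain ⟨x, rfl⟩ := Submodule.Quotient.mk_surjective K xbar
    rw [LinearMap.mem_ker] at hxbar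
    have hx : (↑x : A) ∈ LinearMap.ker ((F (d - i)).subtype.dualMap ∘ₗ B) := by
      rw [LinearMap.mem_ker]
      ext y
      have := congrArg (fun f => f (Submodule.Quotient.mk y : ↥(F (d - i)) ⧸ K')) hxbar
      simpa [Submodule.liftQ_apply, hR, hQapp] using this
    rw [key (d - i) (by omega)] at hx
    have e : d + 1 - (d - i) = i + 1 := by omega
    rw [e] at hx
    rw [Submodule.Quotient.mk_eq_zero]
    exact hx
  · -- surjectivity
    intro f
    have : NoZeroSMulDivisors ℤ (A ⧸ F (d - i)) := htf _
    obtain ⟨g, hg⟩ := exists_extend (F (d - i)) (f ∘ₗ K'.mkQ)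
    obtain ⟨x, hx⟩ := hB.2 g
    have hxF : x ∈ F i := by
      have hxk : x ∈ LinearMap.ker ((F (d - i + 1)).subtype.dualMap ∘ₗ B) := by
        rw [LinearMap.mem_ker]
        ext y
        have hy : (↑y : A) ∈ F (d - i) := hdec (d - i) y.2
        have h5 : B x ↑y = g ↑y := by rw [hx]
        have h6 : g ↑y = f (Submodule.Quotient.mk ⟨↑y, hy⟩) := hg ⟨↑y, hy⟩
        have h7 : (Submodule.Quotient.mk ⟨↑y, hy⟩ : ↥(F (d - i)) ⧸ K') = 0 := by
          rw [Submodule.Quotient.mk_eq_zero]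
          exact y.2
        simp only [LinearMap.comp_apply, LinearMap.dualMap_apply, LinearMap.zero_apply]
        rw [show ((F (d - i + 1)).subtype y : A) = ↑y from rfl] at *
        rw [h5, h6, h7, map_zero]
      rw [key (d - i + 1) (by omega)] at hxk
      have e : d + 1 - (d - i + 1) = i := by omega
      rwa [e] at hxk
    refine ⟨Submodule.Quotient.mk ⟨x, hxF⟩, ?_⟩
    ext y
    show (K.liftQ R.flip h2) (Submodule.Quotient.mk ⟨x, hxF⟩) (Submodule.Quotient.mk y)
      = f (Submodule.Quotient.mk y)
    rw [Submodule.liftQ_apply]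
    show R (Submodule.Quotient.mk y) ⟨x, hxF⟩ = f (Submodule.Quotient.mk y)
    rw [hR, Submodule.liftQ_apply]
    have : Q.flip y ⟨x, hxF⟩ = B x ↑y := rfl
    rw [this, hx]
    exact hg y
end

section
/- Let A be a free finitely generated abelian group with a unimodular bilinear pairing ⟨·,·⟩ : A ⊗ A → ℤ. Let B, C ⊆ A be subgroups such that the quotients A/B and A/C are both torsion-free, ⟨b,c⟩ = 0 for all b ∈ B and c ∈ C, and rk(A/B) = rk(C). Then the induced pairing (A/B) ⊗ C → ℤ, sending [a]⊗c to ⟨a,c⟩, is well-defined and unimodular (the induced map A/B → Hom(C,ℤ) is bijective), and moreover B equals the left orthogonal complement of C, i.e. B = { a ∈ A : ⟨a,c⟩ = 0 for all c ∈ C }. -/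
/-- Let `A` be a free finitely generated abelian group with a unimodular bilinear
pairing `Bl : A ⊗ A → ℤ`, and let `P, C ⊆ A` be subgroups with `A ⧸ P` and `A ⧸ C`
torsion-free, `⟨P, C⟩ = 0`, and `rk (A ⧸ P) = rk C`. Then the induced pairing
`(A ⧸ P) ⊗ C → ℤ` is well-defined and unimodular, and `P` is the left orthogonal
complement of `C`. -/
theorem stmt_7
    (A : Type) [AddCommGroup A] [Module.Free ℤ A] [Module.Finite ℤ A]
    (Bl : A →ₗ[ℤ] A →ₗ[ℤ] ℤ)
    (hBl : Function.Bijective Bl)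
    (P C : Submodule ℤ A)
    (hP : NoZeroSMulDivisors ℤ (A ⧸ P))
    (hC : NoZeroSMulDivisors ℤ (A ⧸ C))
    (horth : ∀ b ∈ P, ∀ c ∈ C, Bl b c = 0)
    (hrk : Module.finrank ℤ (A ⧸ P) = Module.finrank ℤ ↥C) :
    (∃ φ : (A ⧸ P) →ₗ[ℤ] (↥C →ₗ[ℤ] ℤ),
      (∀ (a : A) (c : C), φ (Submodule.Quotient.mk a) c = Bl a (c : A)) ∧
      Function.Bijective φ) ∧
    (∀ a : A, a ∈ P ↔ ∀ c ∈ C, Bl a c = 0) := by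
  classical
  -- the restriction pairing ψ : A → C*
  set ψ : A →ₗ[ℤ] (↥C →ₗ[ℤ] ℤ) := Bl.compl₂ C.subtype with hψdef
  have hψapp : ∀ (a : A) (c : ↥C), ψ a c = Bl a (c : A) := fun a c => rfl
  -- ψ is surjective, since A ⧸ C is free (hence the quotient map splits)
  have hfreeC : Module.Free ℤ (A ⧸ C) := Module.free_of_finite_type_torsion_free'
  obtain ⟨s, hs⟩ := Module.projective_lifting_property C.mkQ (LinearMap.id)
    (Submodule.mkQ_surjective C)
  have hmem : ∀ a : A, a - s (C.mkQ a) ∈ C := by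
    intro a
    rw [← Submodule.Quotient.mk_eq_zero]
    have : C.mkQ (a - s (C.mkQ a)) = 0 := by
      rw [map_sub]
      have := LinearMap.congr_fun hs (C.mkQ a)
      simp only [LinearMap.coe_comp, Function.comp_apply, LinearMap.id_apply] at this
      rw [this, sub_self]
    simpa [Submodule.mkQ_apply] using this
  set π : A →ₗ[ℤ] ↥C :=
    (LinearMap.id - s ∘ₗ C.mkQ).codRestrict C (by simpa using hmem) with hπdef
  have hπc : ∀ c : ↥C, π (c : A) = c := by
    intro c
    apply Subtype.ext
    have h0 : C.mkQ (c : A) = 0 := by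
      simp [Submodule.mkQ_apply, Submodule.Quotient.mk_eq_zero, c.2]
    rw [Submodule.mkQ_apply] at h0
    simp [hπdef, LinearMap.codRestrict, h0]
  have hψsurj : Function.Surjective ψ := by
    intro f
    obtain ⟨a, ha⟩ := hBl.2 (f ∘ₗ π)
    refine ⟨a, ?_⟩
    ext c
    rw [hψapp, ha]
    simp [hπc c]
  -- P is contained in the kernel of ψ
  have hPK : P ≤ LinearMap.ker ψ := by
    intro b hb
    rw [LinearMap.mem_ker]
    ext c
    simpa [hψapp] using horth b hb c c.2
  -- the induced map φ
  set φ : (A ⧸ P) →ₗ[ℤ] (↥C →ₗ[ℤ] ℤ) := P.liftQ ψ hPK with hφdef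
  have hφapp : ∀ (a : A) (c : ↥C), φ (Submodule.Quotient.mk a) c = Bl a (c : A) := by
    intro a c; rfl
  have hφsurj : Function.Surjective φ := by
    intro f
    obtain ⟨a, ha⟩ := hψsurj f
    exact ⟨Submodule.Quotient.mk a, ha⟩
  -- both sides are free of the same finite rank, so surjectivity gives injectivity
  have hfreeQ : Module.Free ℤ (A ⧸ P) := Module.free_of_finite_type_torsion_free'
  have : IsNoetherian ℤ A := isNoetherian_of_isNoetherianRing_of_finite ℤ A
  have hfinC : Module.Finite ℤ ↥C := Module.Finite.of_injective C.subtype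
    (Submodule.injective_subtype C)
  have hfreeCsub : Module.Free ℤ ↥C := Module.free_of_finite_type_torsion_free'
  let b1 := Module.Free.chooseBasis ℤ ↥C
  let b2 := Module.Free.chooseBasis ℤ (A ⧸ P)
  have hcard : Fintype.card (Module.Free.ChooseBasisIndex ℤ (A ⧸ P)) =
      Fintype.card (Module.Free.ChooseBasisIndex ℤ ↥C) := by
    rw [← Module.finrank_eq_card_chooseBasisIndex, ← Module.finrank_eq_card_chooseBasisIndex]
    exact hrk
  -- a linear equivalence from C* to A ⧸ P, using dual basis
  let e : (↥C →ₗ[ℤ] ℤ) ≃ₗ[ℤ] (A ⧸ P) :=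
    b1.dualBasis.equiv b2 (Fintype.equivOfCardEq hcard.symm)
  have hendo : Function.Surjective (e.toLinearMap ∘ₗ φ) :=
    e.surjective.comp hφsurj
  have hinj : Function.Injective (e.toLinearMap ∘ₗ φ) :=
    OrzechProperty.injective_of_surjective_endomorphism _ hendo
  have hφinj : Function.Injective φ := by
    intro x y hxy
    apply hinj
    simp [LinearMap.comp_apply, hxy]
  -- the kernel of ψ is contained in P
  have hKP : LinearMap.ker ψ ≤ P := by
    intro a ha
    have h0 : φ (Submodule.Quotient.mk a) = 0 := by
      have : φ (Submodule.Quotient.mk a) = ψ a := rfl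
      rw [this, LinearMap.mem_ker.mp ha]
    have := hφinj (by simpa using h0 : φ (Submodule.Quotient.mk a) = φ 0)
    simpa [Submodule.Quotient.mk_eq_zero] using this
  refine ⟨⟨φ, hφapp, hφinj, hφsurj⟩, ?_⟩
  intro a
  constructor
  · intro ha c hc
    exact horth a ha c hc
  · intro h
    apply hKP
    rw [LinearMap.mem_ker]
    ext c
    simpa [hψapp] using h c c.2
end
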